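/- Suppose the matrix A has rank one, i.e. (a_1 d_0 + b_0 b_1)(a_0 d_1 + c_0 c_1) = (a_0 b_1 + a_1 c_0)(b_0 d_1 + c_1 d_0). If R = K·(a_1 d_0 + b_0 b_1 + K(a_0 b_1 + a_1 c_0)) / ((b_0 + K a_0)(d_0 + K c_0)) < 1, where K = (b_0 d_1 + c_1 d_0)/(a_1 d_0 + b_0 b_1), then x_{2n} → 0, x_{2n+1} → ∞, y_{2n} → 0 and y_{2n+1} → ∞ as n → ∞. -/

import Mathlib

open Finset Filter Topology

theorem stmt_9
    (x y a b c d : ℕ → ℝ)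
    (hx0 : 0 < x 0) (hy0 : 0 < y 0)
    (hapos : ∀ n, 0 < a n) (hbpos : ∀ n, 0 < b n)
    (hcpos : ∀ n, 0 < c n) (hdpos : ∀ n, 0 < d n)
    (haper : ∀ n, a (n + 2) = a n) (hbper : ∀ n, b (n + 2) = b n)
    (hcper : ∀ n, c (n + 2) = c n) (hdper : ∀ n, d (n + 2) = d n)
    (hxrec : ∀ n, x (n + 1) = a n / x n + b n / y n)
    (hyrec : ∀ n, y (n + 1) = c n / x n + d n / y n)
    (hrank : (a 1 * d 0 + b 0 * b 1) * (a 0 * d 1 + c 0 * c 1) =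
      (a 0 * b 1 + a 1 * c 0) * (b 0 * d 1 + c 1 * d 0))
    (K : ℝ) (hK : K = (b 0 * d 1 + c 1 * d 0) / (a 1 * d 0 + b 0 * b 1))
    (M : ℝ) (hM : M = a 1 * d 0 + b 0 * b 1 + K * (a 0 * b 1 + a 1 * c 0))
    (R : ℝ) (hR : R = K * M / ((b 0 + K * a 0) * (d 0 + K * c 0)))
    (hRlt : R < 1)
    : Tendsto (fun n => x (2 * n)) atTop (nhds 0) ∧
      Tendsto (fun n => x (2 * n + 1)) atTop atTop ∧
      Tendsto (fun n => y (2 * n)) atTop (nhds 0) ∧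
      Tendsto (fun n => y (2 * n + 1)) atTop atTop := by
  have ha0 := hapos 0; have ha1 := hapos 1
  have hb0 := hbpos 0; have hb1 := hbpos 1
  have hc0 := hcpos 0; have hc1 := hcpos 1
  have hd0 := hdpos 0; have hd1 := hdpos 1
  -- positivity of all terms
  have hpos : ∀ n, 0 < x n ∧ 0 < y n := by
    intro n
    induction n with
    | zero => exact ⟨hx0, hy0⟩
    | succ k ih =>
      obtain ⟨h1, h2⟩ := ih
      have ha := hapos k; have hb := hbpos k
      have hc := hcpos k; have hd := hdpos k
      constructor
      · rw [hxrec]; positivity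
      · rw [hyrec]; positivity
  -- two-periodicity helper
  have hper : ∀ (f : ℕ → ℝ), (∀ n, f (n + 2) = f n) → ∀ m r, f (2 * m + r) = f r := by
    intro f hf m r
    induction m with
    | zero => simp
    | succ k ih =>
      have h : 2 * (k + 1) + r = (2 * k + r) + 2 := by ring
      rw [h, hf, ih]
  have pa0 : ∀ m, a (2 * m) = a 0 := fun m => by simpa using hper a haper m 0
  have pb0 : ∀ m, b (2 * m) = b 0 := fun m => by simpa using hper b hbper m 0
  have pc0 : ∀ m, c (2 * m) = c 0 := fun m => by simpa using hper c hcper m 0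
  have pd0 : ∀ m, d (2 * m) = d 0 := fun m => by simpa using hper d hdper m 0
  have hA11 : (0:ℝ) < a 1 * d 0 + b 0 * b 1 := by positivity
  have hKpos : 0 < K := by
    rw [hK]; positivity
  have hKA11 : K * (a 1 * d 0 + b 0 * b 1) = b 0 * d 1 + c 1 * d 0 := by
    rw [hK]; field_simp
  have hKA12 : K * (a 0 * b 1 + a 1 * c 0) = a 0 * d 1 + c 0 * c 1 := by
    have h : (a 1 * d 0 + b 0 * b 1) * (K * (a 0 * b 1 + a 1 * c 0)) =
        (a 1 * d 0 + b 0 * b 1) * (a 0 * d 1 + c 0 * c 1) := by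
      linear_combination (a 0 * b 1 + a 1 * c 0) * hKA11 - hrank
    exact mul_left_cancel₀ (ne_of_gt hA11) h
  have h1 : (c 1 - K * a 1) * c 0 + (d 1 - K * b 1) * a 0 = 0 := by
    linear_combination -hKA12
  have h2 : (c 1 - K * a 1) * d 0 + (d 1 - K * b 1) * b 0 = 0 := by
    linear_combination -hKA11
  -- y(2m+2) = K x(2m+2)
  have hKxy : ∀ m, y (2 * m + 2) = K * x (2 * m + 2) := by
    intro m
    have hxm := (hpos (2 * m)).1
    have hym := (hpos (2 * m)).2
    have hx' := (hpos (2 * m + 1)).1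
    have hy' := (hpos (2 * m + 1)).2
    have ex' : x (2 * m + 1) = a 0 / x (2 * m) + b 0 / y (2 * m) := by
      rw [hxrec, pa0 m, pb0 m]
    have ey' : y (2 * m + 1) = c 0 / x (2 * m) + d 0 / y (2 * m) := by
      rw [hyrec, pc0 m, pd0 m]
    have key : (c 1 - K * a 1) * y (2 * m + 1) + (d 1 - K * b 1) * x (2 * m + 1) = 0 := by
      rw [ex', ey']
      field_simp
      linear_combination y (2 * m) * h1 + x (2 * m) * h2
    have ex2 : x (2 * m + 2) = a 1 / x (2 * m + 1) + b 1 / y (2 * m + 1) := by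
      rw [hxrec, hper a haper m 1, hper b hbper m 1]
    have ey2 : y (2 * m + 2) = c 1 / x (2 * m + 1) + d 1 / y (2 * m + 1) := by
      rw [hyrec, hper c hcper m 1, hper d hdper m 1]
    rw [ex2, ey2]
    field_simp
    linear_combination key
  -- geometric step
  have hb0K : 0 < b 0 + K * a 0 := by positivity
  have hd0K : 0 < d 0 + K * c 0 := by positivity
  have hMpos : 0 < M := by rw [hM]; positivity
  have hRpos : 0 < R := by rw [hR]; positivity
  have hstep : ∀ m, x (2 * m + 4) = R * x (2 * m + 2) := by
    intro m
    have hx2 := (hpos (2 * m + 2)).1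
    have hy2 : y (2 * m + 2) = K * x (2 * m + 2) := hKxy m
    have e0 : (2 : ℕ) * m + 2 = 2 * (m + 1) + 0 := by ring
    have e1 : (2 : ℕ) * m + 3 = 2 * (m + 1) + 1 := by ring
    have ex3 : x (2 * m + 3) = (b 0 + K * a 0) / (K * x (2 * m + 2)) := by
      have := hxrec (2 * m + 2)
      rw [show (2:ℕ) * m + 2 + 1 = 2 * m + 3 from rfl] at this
      rw [this, hy2]
      rw [show a (2*m+2) = a 0 by rw [show (2:ℕ)*m+2 = 2*(m+1) from by ring, pa0], show b (2*m+2) = b 0 by rw [show (2:ℕ)*m+2 = 2*(m+1) from by ring, pb0]]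
      field_simp
      try ring
    have ey3 : y (2 * m + 3) = (d 0 + K * c 0) / (K * x (2 * m + 2)) := by
      have := hyrec (2 * m + 2)
      rw [show (2:ℕ) * m + 2 + 1 = 2 * m + 3 from rfl] at this
      rw [this, hy2]
      rw [show c (2*m+2) = c 0 by rw [show (2:ℕ)*m+2 = 2*(m+1) from by ring, pc0], show d (2*m+2) = d 0 by rw [show (2:ℕ)*m+2 = 2*(m+1) from by ring, pd0]]
      field_simp
      try ring
    have ex4 : x (2 * m + 4) = a 1 / x (2 * m + 3) + b 1 / y (2 * m + 3) := by
      have := hxrec (2 * m + 3)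
      rw [show (2:ℕ) * m + 3 + 1 = 2 * m + 4 from rfl] at this
      rw [this, show a (2*m+3) = a 1 by rw [e1, hper a haper], show b (2*m+3) = b 1 by rw [e1, hper b hbper]]
    rw [ex4, ex3, ey3, hR, hM]
    field_simp
    ring
  -- geometric formula
  have hgeo : ∀ m, x (2 * m + 2) = R ^ m * x 2 := by
    intro m
    induction m with
    | zero => simp
    | succ k ih =>
      have h : (2:ℕ) * (k + 1) + 2 = 2 * k + 4 := by ring
      rw [h, hstep k, ih, pow_succ]; ring
  -- even subsequence of x tends to 0
  have hx2t : Tendsto (fun m => x (2 * m + 2)) atTop (nhds 0) := by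
    simp only [hgeo]
    simpa using (tendsto_pow_atTop_nhds_zero_of_lt_one (le_of_lt hRpos) hRlt).mul_const (x 2)
  have hxeven : Tendsto (fun n => x (2 * n)) atTop (nhds 0) := by
    apply (tendsto_add_atTop_iff_nat 1).mp
    have : ∀ m, x (2 * (m + 1)) = x (2 * m + 2) := by
      intro m; congr 1; try ring
    simpa only [this] using hx2t
  have hy2t : Tendsto (fun m => y (2 * m + 2)) atTop (nhds 0) := by
    simp only [hKxy]
    simpa using hx2t.const_mul K
  have hyeven : Tendsto (fun n => y (2 * n)) atTop (nhds 0) := by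
    apply (tendsto_add_atTop_iff_nat 1).mp
    have : ∀ m, y (2 * (m + 1)) = y (2 * m + 2) := by
      intro m; congr 1; try ring
    simpa only [this] using hy2t
  -- odd subsequences tend to infinity
  have hxw : Tendsto (fun n => x (2 * n)) atTop (nhdsWithin 0 (Set.Ioi 0)) :=
    tendsto_nhdsWithin_of_tendsto_nhds_of_eventually_within _ hxeven
      (Eventually.of_forall fun n => (hpos (2 * n)).1)
  have hyw : Tendsto (fun n => y (2 * n)) atTop (nhdsWithin 0 (Set.Ioi 0)) :=
    tendsto_nhdsWithin_of_tendsto_nhds_of_eventually_within _ hyeven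
      (Eventually.of_forall fun n => (hpos (2 * n)).2)
  have hxinv : Tendsto (fun n => (x (2 * n))⁻¹) atTop atTop := hxw.inv_tendsto_nhdsGT_zero
  have hyinv : Tendsto (fun n => (y (2 * n))⁻¹) atTop atTop := hyw.inv_tendsto_nhdsGT_zero
  have hxodd : Tendsto (fun n => x (2 * n + 1)) atTop atTop := by
    have h : ∀ n, x (2 * n + 1) = a 0 * (x (2 * n))⁻¹ + b 0 / y (2 * n) := by
      intro n
      rw [hxrec, pa0 n, pb0 n, div_eq_mul_inv]
    simp only [h]
    exact Tendsto.atTop_add_nonneg (hxinv.const_mul_atTop ha0)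
      (fun n => div_nonneg (le_of_lt hb0) (le_of_lt (hpos (2 * n)).2))
  have hyodd : Tendsto (fun n => y (2 * n + 1)) atTop atTop := by
    have h : ∀ n, y (2 * n + 1) = c 0 * (x (2 * n))⁻¹ + d 0 / y (2 * n) := by
      intro n
      rw [hyrec, pc0 n, pd0 n, div_eq_mul_inv]
    simp only [h]
    exact Tendsto.atTop_add_nonneg (hxinv.const_mul_atTop hc0)
      (fun n => div_nonneg (le_of_lt hd0) (le_of_lt (hpos (2 * n)).2))
  exact ⟨hxeven, hxodd, hyeven, hyodd⟩
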